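/- For any field k, every Hopf grading of k^{C_2} (the Hopf algebra of functions on the cyclic group of order 2) is trivial: all elements are of trivial degree. Consequently the Hopf fundamental group of k^{C_2} is the trivial group. -/

import Mathlib

/-- For any field `k`, every Hopf grading of `k^{C_2}` (functions on the
cyclic group of order `2`) is trivial: every nontrivial degree has zero homogeneous
component.  Consequently every connected Hopf grading of `k^{C_2}` has trivial grading
group, so the Hopf fundamental group of `k^{C_2}` is the trivial group. -/
theorem hopf_grading_of_functions_on_C2_is_trivial
    {k Γ : Type*} [Field k] [CommGroup Γ] [DecidableEq Γ]
    (𝒜 : Γ → Submodule k (Multiplicative (ZMod 2) → k))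
    (hdecomp : DirectSum.IsInternal 𝒜)
    (hmul : ∀ s t : Γ, ∀ a ∈ 𝒜 s, ∀ b ∈ 𝒜 t, a * b ∈ 𝒜 (s * t))
    (hone : (1 : Multiplicative (ZMod 2) → k) ∈ 𝒜 1)
    (hcounit : ∀ s : Γ, s ≠ 1 → ∀ a ∈ 𝒜 s, a 1 = 0)
    (hantipode : ∀ s : Γ, ∃ t : Γ,
      ∀ a ∈ 𝒜 s, (fun x : Multiplicative (ZMod 2) => a x⁻¹) ∈ 𝒜 t) :
    (∀ s : Γ, s ≠ 1 → 𝒜 s = ⊥) ∧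
    (Subgroup.closure {s : Γ | 𝒜 s ≠ ⊥} = ⊤ → ∀ s : Γ, s = 1) := by
  have key : ∀ s : Γ, s ≠ 1 → 𝒜 s = ⊥ := by
    intro s hs
    rw [Submodule.eq_bot_iff]
    intro a ha
    have ha1 : a 1 = 0 := hcounit s hs a ha
    set t : Multiplicative (ZMod 2) := Multiplicative.ofAdd 1 with ht
    -- a * a belongs to both 𝒜 s (as a scalar multiple of a) and 𝒜 (s*s)
    have hsq : a * a ∈ 𝒜 (s * s) := hmul s s a ha a ha
    have heq : a * a = a t • a := by
      funext x
      have hx : x = 1 ∨ x = t := by revert x; decide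
      rcases hx with hx | hx <;> simp [hx, ha1, mul_comm]
    have hmem : a * a ∈ 𝒜 s := heq ▸ Submodule.smul_mem _ _ ha
    have hne : s ≠ s * s := fun h => hs (by
      have := mul_left_cancel (a := s) (b := (1 : Γ)) (c := s) (by simpa using h.symm)
      exact this.symm)
    have hdisj : Disjoint (𝒜 s) (𝒜 (s * s)) :=
      hdecomp.submodule_iSupIndep.pairwiseDisjoint hne
    have hzero : a * a = 0 := Submodule.disjoint_def.mp hdisj _ hmem hsq
    have hat : a t = 0 := by
      have := congrFun hzero t
      simpa using mul_self_eq_zero.mp this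
    funext x
    have hx : x = 1 ∨ x = t := by revert x; decide
    rcases hx with hx | hx <;> simp [hx, ha1, hat]
  refine ⟨key, fun hcl s => ?_⟩
  have hsub : {s : Γ | 𝒜 s ≠ ⊥} ⊆ (↑(⊥ : Subgroup Γ) : Set Γ) := by
    intro u hu
    simp only [Subgroup.coe_bot, Set.mem_singleton_iff]
    by_contra h
    exact hu (key u h)
  have : Subgroup.closure {s : Γ | 𝒜 s ≠ ⊥} ≤ ⊥ := Subgroup.closure_le ⊥ |>.mpr hsub
  rw [hcl] at this
  simpa using this (Subgroup.mem_top s)
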